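/- Suppose (p_j)_{j=1}^{m} are reals in [0, 1/2] with sum_{j=1}^m p_j <= k, and Y_1 >= Y_2 >= ... >= Y_m >= 0. Then sum_{j=1}^m p_j * Y_j <= (1/2) * sum_{j=1}^{min(2k, m)} Y_j. -/
import Mathlib

/-- Abel-type lemma: if `f` is nonincreasing and nonnegative and all prefix sums
of `g` are nonnegative, then `∑ f i * g i ≥ f n * (prefix sum)` at each stage. -/
lemma abel_aux (f g : ℕ → ℝ) (hf : ∀ i, f (i+1) ≤ f i)
    (hA : ∀ i, 0 ≤ ∑ j ∈ Finset.range i, g j) :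
    ∀ n, f n * (∑ j ∈ Finset.range n, g j) ≤ ∑ i ∈ Finset.range n, f i * g i := by
  intro n
  induction n with
  | zero => simp
  | succ n ih =>
    rw [Finset.sum_range_succ, Finset.sum_range_succ (f := fun i => f i * g i)]
    have h1 : f (n+1) * (∑ j ∈ Finset.range n, g j + g n)
        ≤ f n * (∑ j ∈ Finset.range n, g j + g n) := by
      apply mul_le_mul_of_nonneg_right (hf n)
      have := hA (n+1)
      rwa [Finset.sum_range_succ] at this
    nlinarith [ih]

lemma abel_nonneg (f g : ℕ → ℝ) (hf : ∀ i, f (i+1) ≤ f i) (hf0 : ∀ i, 0 ≤ f i)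
    (hA : ∀ i, 0 ≤ ∑ j ∈ Finset.range i, g j) (n : ℕ) :
    0 ≤ ∑ i ∈ Finset.range n, f i * g i := by
  have := abel_aux f g hf hA n
  have := mul_nonneg (hf0 n) (hA n)
  linarith

/-- If the weights `p j ∈ [0, 1/2]` sum to at most `k` and
`Y_0 ≥ Y_1 ≥ ... ≥ 0`, then `∑ p j * Y j ≤ (1/2) * ∑_{j < min (2k) m} Y j`. -/
theorem stmt2 (m k : ℕ) (hk : 0 < k) (p Y : Fin m → ℝ)
    (hp0 : ∀ j, 0 ≤ p j) (hp : ∀ j, p j ≤ 1/2)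
    (hsum : ∑ j, p j ≤ (k : ℝ))
    (hY : Antitone Y) (hY0 : ∀ j, 0 ≤ Y j) :
    ∑ j, p j * Y j ≤
      (1/2) * ∑ j ∈ Finset.univ.filter (fun j : Fin m => (j : ℕ) < min (2*k) m), Y j := by
  set t := min (2*k) m with ht
  have htm : t ≤ m := min_le_right _ _
  -- extend to ℕ
  set pn : ℕ → ℝ := fun j => if h : j < m then p ⟨j, h⟩ else 0 with hpn
  set Yn : ℕ → ℝ := fun j => if h : j < m then Y ⟨j, h⟩ else 0 with hYn
  set q : ℕ → ℝ := fun j => if j < t then (1/2 : ℝ) else 0 with hq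
  have hpn0 : ∀ j, 0 ≤ pn j := by
    intro j; simp only [hpn]; split <;> [exact hp0 _; exact le_rfl]
  have hpnle : ∀ j, pn j ≤ 1/2 := by
    intro j; simp only [hpn]; split <;> [exact hp _; norm_num]
  have hYn0 : ∀ j, 0 ≤ Yn j := by
    intro j; simp only [hYn]; split <;> [exact hY0 _; exact le_rfl]
  have hYnmono : ∀ i, Yn (i+1) ≤ Yn i := by
    intro i; simp only [hYn]
    split
    · rename_i h1
      have h0 : i < m := Nat.lt_of_succ_lt h1
      rw [dif_pos h0]
      exact hY (by simp [Fin.le_def])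
    · split
      · exact hY0 _
      · exact le_rfl
  -- prefix sums of pn
  have hpn_prefix : ∀ i, ∑ j ∈ Finset.range i, pn j ≤ ((min i t : ℕ) : ℝ) / 2 := by
    intro i
    have hle_half : ∀ N, ∑ j ∈ Finset.range N, pn j ≤ (N : ℝ) / 2 := by
      intro N
      calc ∑ j ∈ Finset.range N, pn j ≤ ∑ _j ∈ Finset.range N, (1/2 : ℝ) :=
            Finset.sum_le_sum fun j _ => hpnle j
        _ = (N : ℝ) / 2 := by simp; ring
    have hle_k : ∑ j ∈ Finset.range i, pn j ≤ (k : ℝ) := by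
      have hsub : ∑ j ∈ Finset.range i, pn j ≤ ∑ j ∈ Finset.range (max i m), pn j :=
        Finset.sum_le_sum_of_subset_of_nonneg
          (Finset.range_subset_range.mpr (le_max_left _ _)) (fun j _ _ => hpn0 j)
      have heq : ∑ j ∈ Finset.range (max i m), pn j = ∑ j ∈ Finset.range m, pn j := by
        refine (Finset.sum_subset (Finset.range_subset_range.mpr (le_max_right _ _)) ?_).symm
        intro x _ hx
        simp only [Finset.mem_range, not_lt] at hx
        simp [hpn, Nat.not_lt.mpr hx]
      have hpm : ∑ j ∈ Finset.range m, pn j = ∑ j, p j := by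
        rw [← Fin.sum_univ_eq_sum_range (fun j => pn j) m]
        exact Finset.sum_congr rfl fun x _ => by simp [hpn, x.isLt]
      calc ∑ j ∈ Finset.range i, pn j ≤ ∑ j ∈ Finset.range m, pn j := hsub.trans heq.le
        _ = ∑ j, p j := hpm
        _ ≤ (k : ℝ) := hsum
    rcases le_or_gt i t with h | h
    · rw [min_eq_left h]; exact hle_half i
    · rw [min_eq_right h.le]
      rcases min_cases (2*k) m with ⟨h1, _⟩ | ⟨h1, h2⟩
      · rw [ht, h1]
        calc ∑ j ∈ Finset.range i, pn j ≤ (k : ℝ) := hle_k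
          _ = ((2*k : ℕ) : ℝ) / 2 := by push_cast; ring
      · rw [ht, h1]
        have : ∑ j ∈ Finset.range i, pn j = ∑ j ∈ Finset.range m, pn j := by
          refine (Finset.sum_subset (Finset.range_subset_range.mpr ?_) ?_).symm
          · rw [ht, h1] at h; omega
          · intro x _ hx
            simp only [Finset.mem_range, not_lt] at hx
            simp [hpn, Nat.not_lt.mpr hx]
        rw [this]; exact hle_half m
  -- prefix sums of q
  have hq_prefix : ∀ i, ∑ j ∈ Finset.range i, q j = ((min i t : ℕ) : ℝ) / 2 := by
    intro i
    have h1 : ∑ j ∈ Finset.range i, q j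
        = ∑ j ∈ (Finset.range i).filter (fun j => j < t), (1/2 : ℝ) :=
      (Finset.sum_filter _ _).symm
    have h2 : (Finset.range i).filter (fun j => j < t) = Finset.range (min i t) := by
      ext x; simp only [Finset.mem_filter, Finset.mem_range, lt_min_iff]
    rw [h1, h2, Finset.sum_const, Finset.card_range, nsmul_eq_mul]; ring
  -- the key inequality via Abel
  have key : 0 ≤ ∑ i ∈ Finset.range m, Yn i * (q i - pn i) := by
    apply abel_nonneg Yn (fun i => q i - pn i) hYnmono hYn0
    intro i
    rw [Finset.sum_sub_distrib, hq_prefix i]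
    have := hpn_prefix i
    linarith
  -- rewrite both sides
  have hLHS : ∑ j, p j * Y j = ∑ i ∈ Finset.range m, pn i * Yn i := by
    rw [← Fin.sum_univ_eq_sum_range (fun i => pn i * Yn i) m]
    exact Finset.sum_congr rfl fun x _ => by simp [hpn, hYn, x.isLt]
  have hRHS : ∑ j ∈ Finset.univ.filter (fun j : Fin m => (j : ℕ) < t), Y j
      = ∑ i ∈ Finset.range m, (if i < t then Yn i else 0) := by
    rw [Finset.sum_filter, ← Fin.sum_univ_eq_sum_range (fun i => if i < t then Yn i else 0) m]
    exact Finset.sum_congr rfl fun x _ => by simp [hYn, x.isLt]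
  have hq_mul : ∀ i, q i * Yn i = (if i < t then Yn i else 0) * (1/2) := by
    intro i; simp only [hq]; split <;> ring
  have hfinal : ∑ i ∈ Finset.range m, pn i * Yn i
      ≤ (1/2) * ∑ i ∈ Finset.range m, (if i < t then Yn i else 0) := by
    have h1 : ∑ i ∈ Finset.range m, pn i * Yn i ≤ ∑ i ∈ Finset.range m, q i * Yn i := by
      have := key
      rw [Finset.sum_congr rfl (fun i _ => by ring :
        ∀ i ∈ Finset.range m, Yn i * (q i - pn i) = q i * Yn i - pn i * Yn i),
        Finset.sum_sub_distrib] at this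
      linarith
    calc ∑ i ∈ Finset.range m, pn i * Yn i ≤ ∑ i ∈ Finset.range m, q i * Yn i := h1
      _ = ∑ i ∈ Finset.range m, (if i < t then Yn i else 0) * (1/2) :=
          Finset.sum_congr rfl fun i _ => hq_mul i
      _ = (1/2) * ∑ i ∈ Finset.range m, (if i < t then Yn i else 0) := by
          rw [← Finset.sum_mul]; ring
  rw [hLHS, hRHS]
  exact hfinal
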